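/- arXiv:1603.05186 — 2 statements merged into one kernel-verified Lean document; each statement's English description precedes it below -/
import Mathlib

section
/- Let u be an analytic solution of the Helmholtz equation Δu + k²u = 0 on a neighbourhood of the origin in ℝⁿ (n = 2 or 3), with k ∈ ℂ. Suppose all partial derivatives of u of order strictly less than M vanish at the origin. Then the homogeneous Taylor polynomial of u of degree M at the origin is a harmonic polynomial, and so is the homogeneous Taylor polynomial of degree M+1. -/
open Metric

/-- Euclidean Laplacian: sum of second derivatives in the coordinate directions. -/
noncomputable def lapE {n : ℕ} (f : EuclideanSpace ℝ (Fin n) → ℂ)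
    (x : EuclideanSpace ℝ (Fin n)) : ℂ :=
  ∑ i : Fin n, iteratedFDeriv ℝ 2 f x ![EuclideanSpace.single i 1, EuclideanSpace.single i 1]

namespace TaylorHarmonicAux

open FormalMultilinearSeries

variable {𝕜 : Type*} [NontriviallyNormedField 𝕜] {E F : Type*} [NormedAddCommGroup E]
  [NormedSpace 𝕜 E] [NormedAddCommGroup F] [NormedSpace 𝕜 F]

lemma changeOriginSeriesTerm_congr (p q : FormalMultilinearSeries 𝕜 E F) (k l : ℕ)
    (s : Finset (Fin (k + l))) (hs : s.card = l) (h : p (k + l) = q (k + l)) :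
    p.changeOriginSeriesTerm k l s hs = q.changeOriginSeriesTerm k l s hs := by
  unfold FormalMultilinearSeries.changeOriginSeriesTerm
  rw [h]

lemma derivSeries_congr (p q : FormalMultilinearSeries 𝕜 E F) (j : ℕ)
    (h : p (1 + j) = q (1 + j)) : p.derivSeries j = q.derivSeries j := by
  simp only [FormalMultilinearSeries.derivSeries,
    ContinuousLinearMap.compFormalMultilinearSeries_apply]
  congr 1
  simp only [FormalMultilinearSeries.changeOriginSeries]
  exact Finset.sum_congr rfl fun s _ => changeOriginSeriesTerm_congr p q 1 j s.1 s.2 h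

lemma derivSeries_zero (j : ℕ) :
    (0 : FormalMultilinearSeries 𝕜 E F).derivSeries j = 0 := by
  ext v w
  simp [FormalMultilinearSeries.derivSeries, FormalMultilinearSeries.changeOriginSeries,
    FormalMultilinearSeries.changeOriginSeriesTerm]

/-- The formal multilinear series with a single coefficient `C` in degree `m`. -/
noncomputable def singleSeries (m : ℕ)
    (C : ContinuousMultilinearMap 𝕜 (fun _ : Fin m => E) F) :
    FormalMultilinearSeries 𝕜 E F :=
  fun j => if h : m = j then h ▸ C else 0

lemma singleSeries_same (m : ℕ) (C : ContinuousMultilinearMap 𝕜 (fun _ : Fin m => E) F) :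
    singleSeries m C m = C := by
  unfold singleSeries
  exact dif_pos rfl

lemma singleSeries_ne (m : ℕ) (C : ContinuousMultilinearMap 𝕜 (fun _ : Fin m => E) F)
    (j : ℕ) (h : m ≠ j) : singleSeries m C j = 0 := by
  unfold singleSeries
  exact dif_neg h

lemma hasFPowerSeriesOnBall_singleSeries (m : ℕ)
    (C : ContinuousMultilinearMap 𝕜 (fun _ : Fin m => E) F) :
    HasFPowerSeriesOnBall (fun y => C (fun _ => y)) (singleSeries m C) 0 ⊤ := by
  refine (HasFiniteFPowerSeriesOnBall.mk' (n := m + 1)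
    (fun j hj => singleSeries_ne m C j (by omega)) ENNReal.zero_lt_top
    (fun y _ => ?_)).toHasFPowerSeriesOnBall
  rw [Finset.sum_eq_single_of_mem m (Finset.self_mem_range_succ m)]
  · rw [singleSeries_same, zero_add]
  · intro j _ hj
    rw [singleSeries_ne m C j (Ne.symm hj)]
    rfl

end TaylorHarmonicAux

open TaylorHarmonicAux FormalMultilinearSeries

set_option maxHeartbeats 2000000 in
set_option synthInstance.maxHeartbeats 400000 in
/-- If `u` is an analytic solution of the Helmholtz equation `Δu + k²u = 0` near the origin
in ℝⁿ (n = 2 or 3), all of whose partial derivatives of order `< M` vanish at the origin, then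
the homogeneous Taylor polynomials of `u` of degrees `M` and `M+1` at the origin are harmonic. -/
theorem taylor_terms_harmonic {n : ℕ} (hn : n = 2 ∨ n = 3) (k : ℂ) (M : ℕ) (ε : ℝ) (hε : 0 < ε)
    (u : EuclideanSpace ℝ (Fin n) → ℂ)
    (hu_an : AnalyticOnNhd ℝ u (ball 0 ε))
    (hu_helm : ∀ x ∈ ball (0 : EuclideanSpace ℝ (Fin n)) ε, lapE u x + k ^ 2 * u x = 0)
    (hvanish : ∀ j < M, iteratedFDeriv ℝ j u 0 = 0) :
    (∀ x, lapE (fun y => ((M.factorial : ℂ))⁻¹ • iteratedFDeriv ℝ M u 0 (fun _ => y)) x = 0) ∧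
    (∀ x, lapE (fun y => (((M + 1).factorial : ℂ))⁻¹ • iteratedFDeriv ℝ (M + 1) u 0 (fun _ => y)) x = 0) := by
  classical
  -- The contraction functional computing the Laplacian from the second derivative.
  set L : (EuclideanSpace ℝ (Fin n) →L[ℝ] (EuclideanSpace ℝ (Fin n) →L[ℝ] ℂ)) →L[ℝ] ℂ :=
    ∑ i : Fin n, (ContinuousLinearMap.apply ℝ ℂ (EuclideanSpace.single i 1)).comp
      (ContinuousLinearMap.apply ℝ (EuclideanSpace ℝ (Fin n) →L[ℝ] ℂ) (EuclideanSpace.single i 1)) with hL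
  have hlap : ∀ (f : EuclideanSpace ℝ (Fin n) → ℂ) (x : EuclideanSpace ℝ (Fin n)), lapE f x = L (fderiv ℝ (fderiv ℝ f) x) := by
    intro f x
    rw [lapE, hL]
    simp only [ContinuousLinearMap.sum_apply, ContinuousLinearMap.comp_apply,
      ContinuousLinearMap.apply_apply]
    refine Finset.sum_congr rfl fun i _ => ?_
    rw [iteratedFDeriv_two_apply]
    simp
  -- Power series for `u` at `0`.
  obtain ⟨p, hp⟩ : AnalyticAt ℝ u 0 := hu_an 0 (mem_ball_self hε)
  obtain ⟨rp, hpr0⟩ := hp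
  set r : ENNReal := min rp (ENNReal.ofReal ε) with hr
  have hr_pos : 0 < r := lt_min hpr0.r_pos (by simp [hε])
  have hpr : HasFPowerSeriesOnBall u p 0 r := hpr0.mono hr_pos (min_le_left _ _)
  have hball : Metric.eball (0 : EuclideanSpace ℝ (Fin n)) r ⊆ ball 0 ε := by
    intro y hy
    have h1 : y ∈ Metric.eball (0 : EuclideanSpace ℝ (Fin n)) (ENNReal.ofReal ε) :=
      Metric.eball_subset_eball (min_le_right _ _) hy
    rwa [Metric.emetric_ball] at h1
  -- Two power series for `g = lapE u` near `0`.
  set c : ℂ →L[ℝ] ℂ := (-(k ^ 2)) • ((1 : ℂ →L[ℂ] ℂ).restrictScalars ℝ) with hc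
  set g : EuclideanSpace ℝ (Fin n) → ℂ := fun y => L (fderiv ℝ (fderiv ℝ u) y) with hg
  haveI : ContinuousAdd (EuclideanSpace ℝ (Fin n) →L[ℝ] (EuclideanSpace ℝ (Fin n) →L[ℝ] ℂ)) := by
    have := (ContinuousLinearMap.topologicalAddGroup : IsTopologicalAddGroup (EuclideanSpace ℝ (Fin n) →L[ℝ] (EuclideanSpace ℝ (Fin n) →L[ℝ] ℂ)))
    exact this.toContinuousAdd
  have hg1 : HasFPowerSeriesOnBall g
      (L.compFormalMultilinearSeries p.derivSeries.derivSeries) 0 r := by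
    have h := L.comp_hasFPowerSeriesOnBall (hpr.fderiv.fderiv)
    exact h
  have hg2 : HasFPowerSeriesOnBall g (c.compFormalMultilinearSeries p) 0 r := by
    refine (c.comp_hasFPowerSeriesOnBall hpr).congr fun y hy => ?_
    have h1 := hu_helm y (hball hy)
    have h2 : lapE u y = -(k ^ 2 * u y) := by linear_combination h1
    calc (c ∘ u) y = -(k ^ 2) * u y := by
            simp [hc, smul_eq_mul]
      _ = lapE u y := by rw [h2]; ring
      _ = g y := hlap u y
  -- The key identity relating the contracted second derivative series to `p`.
  have star : ∀ (m : ℕ) (y : EuclideanSpace ℝ (Fin n)),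
      L (p.derivSeries.derivSeries m (fun _ => y)) = -(k ^ 2) * p m (fun _ => y) := by
    intro m y
    have h1 := hg1.factorial_smul y m
    have h2 := hg2.factorial_smul y m
    have h3 := h1.trans h2.symm
    simp only [ContinuousLinearMap.compFormalMultilinearSeries_apply,
      ContinuousLinearMap.compContinuousMultilinearMap_coe, Function.comp_apply] at h3
    rw [nsmul_eq_mul, nsmul_eq_mul] at h3
    have hfac : ((m.factorial : ℂ)) ≠ 0 := Nat.cast_ne_zero.2 m.factorial_ne_zero
    have h4 := mul_left_cancel₀ hfac h3
    rw [h4]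
    simp [hc, smul_eq_mul]
  -- Low-order diagonal coefficients of `p` vanish.
  have hdiag : ∀ j < M, ∀ y : EuclideanSpace ℝ (Fin n), p j (fun _ => y) = 0 := by
    intro j hj y
    have h := hpr.factorial_smul y j
    rw [hvanish j hj] at h
    simp only [ContinuousMultilinearMap.zero_apply] at h
    rw [nsmul_eq_mul] at h
    have hfac : ((j.factorial : ℂ)) ≠ 0 := Nat.cast_ne_zero.2 j.factorial_ne_zero
    exact (mul_eq_zero.1 h).resolve_left hfac
  -- Main computation: the Laplacian of the diagonal of `p m` vanishes.
  have key : ∀ m : ℕ, (∀ j, j + 2 = m → ∀ y : EuclideanSpace ℝ (Fin n), p j (fun _ => y) = 0) →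
      ∀ x : EuclideanSpace ℝ (Fin n), lapE (fun y => p m (fun _ => y)) x = 0 := by
    intro m hm x
    set q : FormalMultilinearSeries ℝ (EuclideanSpace ℝ (Fin n)) ℂ := singleSeries m (p m) with hq
    have hqball : HasFPowerSeriesOnBall (fun y => p m (fun _ => y)) q 0 ⊤ :=
      hasFPowerSeriesOnBall_singleSeries m (p m)
    have hq2 : HasFPowerSeriesOnBall (𝕜 := ℝ) (fderiv ℝ (fderiv ℝ (fun y => p m (fun _ => y))))
        q.derivSeries.derivSeries 0 ⊤ := hqball.fderiv.fderiv
    have hx : x ∈ Metric.eball (0 : EuclideanSpace ℝ (Fin n)) ⊤ := by simp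
    have hsum := (hq2.hasSum hx).mapL L
    have hzero : ∀ j : ℕ, L (q.derivSeries.derivSeries j (fun _ => x)) = 0 := by
      intro j
      by_cases hjm : 1 + (1 + j) = m
      · have e1 : q.derivSeries.derivSeries j = p.derivSeries.derivSeries j := by
          refine derivSeries_congr _ _ _ (derivSeries_congr _ _ _ ?_)
          rw [hjm, hq, singleSeries_same]
        rw [e1, star j x, hm j (by omega) x, mul_zero]
      · have e0 : q.derivSeries.derivSeries j = 0 := by
          have h1 : q.derivSeries (1 + j) = (0 : FormalMultilinearSeries ℝ (EuclideanSpace ℝ (Fin n)) ℂ).derivSeries (1 + j) := by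
            refine derivSeries_congr _ _ _ ?_
            rw [hq, singleSeries_ne m (p m) _ (fun h => hjm h.symm)]
            rfl
          have h2 : q.derivSeries (1 + j) = 0 := by rw [h1, derivSeries_zero]
          have h3 : q.derivSeries.derivSeries j
              = (0 : FormalMultilinearSeries ℝ (EuclideanSpace ℝ (Fin n)) (EuclideanSpace ℝ (Fin n) →L[ℝ] ℂ)).derivSeries j := by
            refine derivSeries_congr _ _ _ ?_
            rw [h2]
            rfl
          rw [h3, derivSeries_zero]
        rw [e0]
        simp
    have hfin : L (fderiv ℝ (fderiv ℝ (fun y => p m (fun _ => y))) (0 + x)) = 0 := by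
      have h0 : HasSum (fun _ : ℕ => (0 : ℂ))
          (L (fderiv ℝ (fderiv ℝ (fun y => p m (fun _ => y))) (0 + x))) := by
        convert hsum using 1
        funext j
        exact (hzero j).symm
      exact h0.unique hasSum_zero
    rw [zero_add] at hfin
    rw [hlap]
    exact hfin
  -- Assemble the two statements.
  have main : ∀ m : ℕ, (∀ j, j + 2 = m → j < M) →
      ∀ x : EuclideanSpace ℝ (Fin n), lapE (fun y => ((m.factorial : ℂ))⁻¹ • iteratedFDeriv ℝ m u 0 (fun _ => y)) x = 0 := by
    intro m hmM x
    have hfun : (fun y : EuclideanSpace ℝ (Fin n) => ((m.factorial : ℂ))⁻¹ • iteratedFDeriv ℝ m u 0 (fun _ => y))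
        = fun y => p m (fun _ => y) := by
      funext y
      rw [← hpr.factorial_smul y m, nsmul_eq_mul, smul_eq_mul, ← mul_assoc,
        inv_mul_cancel₀ (Nat.cast_ne_zero.2 m.factorial_ne_zero : (m.factorial : ℂ) ≠ 0), one_mul]
    rw [hfun]
    exact key m (fun j hj y => hdiag j (hmM j hj) y) x
  exact ⟨main M (fun j hj => by omega), main (M + 1) (fun j hj => by omega)⟩
end

section
/- Let m ≥ 2 be a natural number and let ζ ∈ ℂ satisfy |ζ| = 1 and ζ ≠ −1. Then m² ζ^{m-1} (1 + ζ)² + (−1)^m ((−1)^m ζ^m − 1)² ≠ 0. -/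
open Finset

/-- For `m ≥ 2`, `|ζ| = 1`, `ζ ≠ -1`, the determinant expression
`m² ζ^{m-1} (1+ζ)² + (−1)^m ((−1)^m ζ^m − 1)²` does not vanish. -/
theorem corner_determinant_ne_zero (m : ℕ) (hm : 2 ≤ m) (ζ : ℂ)
    (hζ : ‖ζ‖ = 1) (hζ1 : ζ ≠ -1) :
    (m : ℂ) ^ 2 * ζ ^ (m - 1) * (1 + ζ) ^ 2
      + (-1 : ℂ) ^ m * ((-1 : ℂ) ^ m * ζ ^ m - 1) ^ 2 ≠ 0 := by
  intro h
  set v : ℂ := -ζ with hv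
  have hζv : ζ = -v := by simp [hv]
  have hv1 : v ≠ 1 := by
    intro hc
    apply hζ1
    rw [hζv, hc]
  have hva : ‖v‖ = 1 := by simpa [hv] using hζ
  have hm1 : m - 1 + 1 = m := by omega
  -- rewrite hypothesis in terms of v
  have key : (m : ℂ) ^ 2 * v ^ (m - 1) * (1 - v) ^ 2 = (v ^ m - 1) ^ 2 := by
    have e1 : ζ ^ (m - 1) = (-1 : ℂ) ^ (m - 1) * v ^ (m - 1) := by
      rw [hζv, neg_pow]
    have e2 : (-1 : ℂ) ^ m * ζ ^ m = v ^ m := by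
      rw [hζv, ← mul_pow]
      congr 1
      ring
    have e3 : (-1 : ℂ) ^ m = -(-1 : ℂ) ^ (m - 1) := by
      conv_lhs => rw [← hm1]
      rw [pow_succ]; ring
    rw [e1, e2, e3] at h
    have hs : (-1 : ℂ) ^ (m - 1) ≠ 0 := by
      apply pow_ne_zero; norm_num
    have h' : (-1 : ℂ) ^ (m - 1) *
        ((m : ℂ) ^ 2 * v ^ (m - 1) * (1 - v) ^ 2 - (v ^ m - 1) ^ 2) = 0 := by
      rw [← h]
      have h1ζ : (1 : ℂ) + ζ = 1 - v := by rw [hζv]; ring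
      rw [h1ζ]; ring
    exact sub_eq_zero.mp ((mul_eq_zero.mp h').resolve_left hs)
  -- cancel (1-v)^2 using the geometric sum
  set T : ℂ := ∑ k ∈ range m, v ^ k with hT
  have h1v : (1 : ℂ) - v ≠ 0 := sub_ne_zero.mpr (Ne.symm hv1)
  have hgeom : v ^ m - 1 = T * (v - 1) := (geom_sum_mul v m).symm
  have hmain : (m : ℂ) ^ 2 * v ^ (m - 1) = T ^ 2 := by
    have h2 : (m : ℂ) ^ 2 * v ^ (m - 1) * (1 - v) ^ 2 = T ^ 2 * (1 - v) ^ 2 := by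
      rw [key, hgeom]; ring
    exact mul_right_cancel₀ (pow_ne_zero 2 h1v) h2
  -- bound |T| < m
  have hnormsq : v.re ^ 2 + v.im ^ 2 = 1 := by
    have := Complex.sq_norm v
    rw [hva] at this
    rw [Complex.normSq_apply] at this
    nlinarith
  have hre : v.re < 1 := by
    rcases lt_or_ge v.re 1 with h' | h'
    · exact h'
    · exfalso
      have him : v.im = 0 := by nlinarith
      have : v.re = 1 := by nlinarith
      exact hv1 (Complex.ext this (by simp [him]))
  have h1pv : ‖1 + v‖ < 2 := by
    have hsq : ‖1 + v‖ ^ 2 < 4 := by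
      rw [Complex.sq_norm, Complex.normSq_apply]
      simp only [Complex.add_re, Complex.add_im, Complex.one_re, Complex.one_im]
      nlinarith
    nlinarith [norm_nonneg (1 + v)]
  have hTsplit : T = (1 + v) + ∑ k ∈ Ico 2 m, v ^ k := by
    rw [hT, range_eq_Ico, ← Finset.sum_Ico_consecutive _ (by omega : 0 ≤ 2) hm]
    congr 1
    rw [← range_eq_Ico]
    simp [Finset.sum_range_succ]
  have hrest : ‖∑ k ∈ Ico 2 m, v ^ k‖ ≤ (m : ℝ) - 2 := by
    calc ‖∑ k ∈ Ico 2 m, v ^ k‖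
        ≤ ∑ k ∈ Ico 2 m, ‖v ^ k‖ := by
          exact norm_sum_le _ _
      _ = ∑ k ∈ Ico 2 m, 1 := by
          apply Finset.sum_congr rfl
          intro k _
          rw [norm_pow, hva, one_pow]
      _ = (m : ℝ) - 2 := by
          rw [Finset.sum_const, Nat.card_Ico, nsmul_eq_mul, mul_one, Nat.cast_sub hm]
          push_cast; ring
  have hTlt : ‖T‖ < (m : ℝ) := by
    calc ‖T‖ ≤ ‖1 + v‖ + ‖∑ k ∈ Ico 2 m, v ^ k‖ := by
          rw [hTsplit]; exact norm_add_le _ _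
      _ < 2 + ((m : ℝ) - 2) := by linarith
      _ = (m : ℝ) := by ring
  -- contradiction via absolute values
  have habs : ‖(m : ℂ) ^ 2 * v ^ (m - 1)‖ = (m : ℝ) ^ 2 := by
    rw [norm_mul, norm_pow, norm_pow, hva, one_pow, mul_one, Complex.norm_natCast]
  have habsT : ‖T ^ 2‖ < (m : ℝ) ^ 2 := by
    rw [norm_pow]
    have h0 : (0 : ℝ) ≤ ‖T‖ := norm_nonneg T
    nlinarith
  rw [hmain] at habs
  exact absurd habs (ne_of_lt habsT)
end
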